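/- Let π and π' be partial non-adaptive policies, and suppose that for some ℓ ∈ [n] with ℓ ≤ length(π) and ℓ' ∈ [n] with ℓ' ≤ length(π'), the set {π'(1),…,π'(ℓ')} dominates the set {π(1),…,π(ℓ)}. Then Pr[cost(π') > ℓ'] ≤ Pr[cost(π) > ℓ]. -/

import Mathlib

open Finset

/-- Among the first `ℓ` tests of the partial non-adaptive policy `σ` on outcome `x`,
there are at least `k` ones or at least `n−k+1` zeros. -/
def Stops (n k : ℕ) (σ : List (Fin n)) (x : Fin n → Bool) (ℓ : ℕ) : Prop :=
  k ≤ ((σ.take ℓ).filter fun i => x i).length ∨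
    n - k + 1 ≤ ((σ.take ℓ).filter fun i => !x i).length

open Classical in
/-- The cost of a partial non-adaptive policy `σ` on outcome `x`: the least `ℓ ≤ length σ`
with at least `k` ones or at least `n−k+1` zeros among the first `ℓ` tests, and `n` if no
such `ℓ` exists. -/
noncomputable def cost (n k : ℕ) (σ : List (Fin n)) (x : Fin n → Bool) : ℕ :=
  if ∃ ℓ ≤ σ.length, Stops n k σ x ℓ then sInf {ℓ | Stops n k σ x ℓ} else n

open Classical in
/-- `Pr[P]` with respect to the product measure on `{0,1}^n` where `Pr[x_i = 1] = p_i`. -/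
noncomputable def pr {n : ℕ} (p : Fin n → ℝ) (P : (Fin n → Bool) → Prop) : ℝ :=
  ∑ x : Fin n → Bool, if P x then (∏ i, if x i then p i else 1 - p i) else 0

namespace Stmt9
open Classical


/-- `tp c l` : probability that a sum of independent Bernoullis with success
probabilities `l` is at most `c`. -/
def tp : ℕ → List ℝ → ℝ
  | _, [] => 1
  | 0, q :: l => (1 - q) * tp 0 l
  | c + 1, q :: l => q * tp c l + (1 - q) * tp (c + 1) l

def Ok (l : List ℝ) : Prop := ∀ q ∈ l, 0 ≤ q ∧ q ≤ 1

lemma ok_cons {q l} (h : Ok (q :: l)) : (0 ≤ q ∧ q ≤ 1) ∧ Ok l := by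
  constructor
  · exact h q (List.mem_cons_self)
  · intro a ha; exact h a (List.mem_cons_of_mem _ ha)

lemma tp_nonneg : ∀ (c : ℕ) (l : List ℝ), Ok l → 0 ≤ tp c l
  | _, [], _ => by simp [tp]
  | 0, q :: l, h => by
      obtain ⟨⟨h0, h1⟩, hl⟩ := ok_cons h
      have := tp_nonneg 0 l hl
      simp only [tp]; nlinarith
  | c + 1, q :: l, h => by
      obtain ⟨⟨h0, h1⟩, hl⟩ := ok_cons h
      have := tp_nonneg c l hl
      have := tp_nonneg (c + 1) l hl
      simp only [tp]; nlinarith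

lemma tp_le_one : ∀ (c : ℕ) (l : List ℝ), Ok l → tp c l ≤ 1
  | _, [], _ => by simp [tp]
  | 0, q :: l, h => by
      obtain ⟨⟨h0, h1⟩, hl⟩ := ok_cons h
      have := tp_le_one 0 l hl
      have := tp_nonneg 0 l hl
      simp only [tp]; nlinarith
  | c + 1, q :: l, h => by
      obtain ⟨⟨h0, h1⟩, hl⟩ := ok_cons h
      have := tp_le_one c l hl
      have := tp_le_one (c + 1) l hl
      simp only [tp]; nlinarith

lemma tp_mono_c : ∀ (c : ℕ) (l : List ℝ), Ok l → tp c l ≤ tp (c + 1) l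
  | _, [], _ => by simp [tp]
  | 0, q :: l, h => by
      obtain ⟨⟨h0, h1⟩, hl⟩ := ok_cons h
      have := tp_mono_c 0 l hl
      have := tp_nonneg 0 l hl
      have := tp_nonneg 1 l hl
      simp only [tp]; nlinarith
  | c + 1, q :: l, h => by
      obtain ⟨⟨h0, h1⟩, hl⟩ := ok_cons h
      have := tp_mono_c c l hl
      have := tp_mono_c (c + 1) l hl
      simp only [tp]; nlinarith

lemma tp_cons_le (c : ℕ) (q : ℝ) (l : List ℝ) (h : Ok (q :: l)) :
    tp c (q :: l) ≤ tp c l := by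
  obtain ⟨⟨h0, h1⟩, hl⟩ := ok_cons h
  cases c with
  | zero =>
      have := tp_nonneg 0 l hl
      simp only [tp]; nlinarith
  | succ c =>
      have := tp_mono_c c l hl
      simp only [tp]; nlinarith

lemma tp_head_mono (c : ℕ) {q q' : ℝ} (l : List ℝ) (hqq : q ≤ q') (hl : Ok l) :
    tp c (q' :: l) ≤ tp c (q :: l) := by
  cases c with
  | zero =>
      have := tp_nonneg 0 l hl
      simp only [tp]; nlinarith
  | succ c =>
      have := tp_mono_c c l hl
      simp only [tp]; nlinarith

lemma tp_suffix (c : ℕ) (A B : List ℝ) (h : Ok (A ++ B)) : tp c (A ++ B) ≤ tp c B := by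
  induction A with
  | nil => simp
  | cons a A ih =>
      have h' : Ok (A ++ B) := fun q hq => h q (List.mem_cons_of_mem _ hq)
      calc tp c (a :: (A ++ B)) ≤ tp c (A ++ B) := tp_cons_le _ _ _ (by simpa using h)
        _ ≤ tp c B := ih h'

lemma tp_prefix : ∀ (c : ℕ) (A B : List ℝ), Ok (A ++ B) → tp c (A ++ B) ≤ tp c A
  | c, [], B, h => by
      have := tp_le_one c B (by simpa using h)
      simpa [tp] using this
  | c, a :: A, B, h => by
      obtain ⟨⟨h0, h1⟩, hl⟩ := ok_cons (show Ok (a :: (A ++ B)) by simpa using h)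
      cases c with
      | zero =>
          have := tp_prefix 0 A B hl
          simp only [List.cons_append, tp, List.append_eq]; nlinarith
      | succ c =>
          have := tp_prefix c A B hl
          have := tp_prefix (c + 1) A B hl
          simp only [List.cons_append, tp, List.append_eq]; nlinarith

lemma tp_forall₂ : ∀ (c : ℕ) {l l' : List ℝ}, List.Forall₂ (· ≤ ·) l l' →
    Ok l → Ok l' → tp c l' ≤ tp c l := by
  intro c l l' h
  induction h generalizing c with
  | nil => exact fun _ _ => le_rfl
  | @cons a a' t t' haa _ ih =>
      intro hl hl'
      obtain ⟨⟨ha0, ha1⟩, ht⟩ := ok_cons hl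
      obtain ⟨⟨ha0', ha1'⟩, ht'⟩ := ok_cons hl'
      have step : tp c (a' :: t') ≤ tp c (a :: t') := tp_head_mono c t' haa ht'
      refine step.trans ?_
      cases c with
      | zero =>
          have := ih (c := 0) ht ht'
          simp only [tp]; nlinarith
      | succ c =>
          have h1 := ih (c := c) ht ht'
          have h2 := ih (c := c + 1) ht ht'
          simp only [tp]; nlinarith


lemma pr_congr {n} (p : Fin n → ℝ) {P Q : (Fin n → Bool) → Prop}
    (h : ∀ x, P x ↔ Q x) : pr p P = pr p Q := by
  unfold pr; exact Finset.sum_congr rfl fun x _ => by rw [if_congr (h x) rfl rfl]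

lemma pr_true {n} (p : Fin n → ℝ) : pr p (fun _ => True) = 1 := by
  unfold pr
  simp only [if_true]
  have := Finset.prod_univ_sum (fun _ : Fin n => (Finset.univ : Finset Bool))
    (fun i b => if b then p i else 1 - p i)
  rw [Fintype.piFinset_univ] at this
  rw [← this]
  simp

lemma pr_false {n} (p : Fin n → ℝ) : pr p (fun _ => False) = 0 := by
  unfold pr; simp

lemma pr_and {n} (p : Fin n → ℝ) {P Q : (Fin n → Bool) → Prop}
    (h : ∀ x, P x ∨ Q x) : pr p (fun x => P x ∧ Q x) = pr p P + pr p Q - 1 := by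
  have key : pr p (fun x => P x ∧ Q x) + pr p (fun _ => True) = pr p P + pr p Q := by
    unfold pr
    rw [← Finset.sum_add_distrib, ← Finset.sum_add_distrib]
    refine Finset.sum_congr rfl fun x _ => ?_
    rcases h x with hx | hx
    · by_cases hq : Q x <;> simp [hx, hq]
    · by_cases hp' : P x <;> simp [hx, hp']
  rw [pr_true] at key
  linarith


lemma pr_split {n} (p : Fin n → ℝ) (i : Fin n) (P : (Fin n → Bool) → Prop) :
    pr p P = p i * pr p (fun x => P (Function.update x i true))
      + (1 - p i) * pr p (fun x => P (Function.update x i false)) := by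
  set e := Equiv.funSplitAt i Bool with he
  have hxi : ∀ (b : Bool) (y), e.symm (b, y) i = b := by
    intro b y; simp [he, Equiv.funSplitAt_symm_apply]
  have hxj : ∀ (b : Bool) y (j) (hj : j ≠ i), e.symm (b, y) j = y ⟨j, hj⟩ := by
    intro b y j hj; simp [he, Equiv.funSplitAt_symm_apply, hj]
  have hupd : ∀ (b b' : Bool) y, Function.update (e.symm (b, y)) i b' = e.symm (b', y) := by
    intro b b' y; funext j
    by_cases hj : j = i
    · subst hj; simp [hxi, Function.update_self]
    · rw [Function.update_of_ne hj, hxj _ _ _ hj, hxj _ _ _ hj]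
  set W : ({j // j ≠ i} → Bool) → ℝ :=
    fun y => ∏ j ∈ Finset.univ.erase i, (if e.symm (true, y) j then p j else 1 - p j) with hW
  have hw : ∀ (b : Bool) y, (∏ j, if e.symm (b, y) j then p j else 1 - p j)
      = (if b then p i else 1 - p i) * W y := by
    intro b y
    rw [← Finset.mul_prod_erase Finset.univ _ (Finset.mem_univ i)]
    congr 1
    · rw [hxi]
    · exact Finset.prod_congr rfl fun j hj => by
        rw [hxj _ _ _ (Finset.ne_of_mem_erase hj), hxj _ _ _ (Finset.ne_of_mem_erase hj)]
  have expand : ∀ Q : (Fin n → Bool) → Prop,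
      pr p Q = ∑ b : Bool, ∑ y,
        (if Q (e.symm (b, y)) then (if b then p i else 1 - p i) * W y else 0) := by
    intro Q
    unfold pr
    rw [← Equiv.sum_comp e.symm
      (fun x => if Q x then (∏ j, if x j then p j else 1 - p j) else 0), Fintype.sum_prod_type]
    exact Finset.sum_congr rfl fun b _ => Finset.sum_congr rfl fun y _ => by rw [hw]
  rw [expand P, expand (fun x => P (Function.update x i true)),
    expand (fun x => P (Function.update x i false))]
  simp only [hupd]
  rw [Fintype.sum_bool, Fintype.sum_bool, Fintype.sum_bool]
  have pull : ∀ (c : Prop) [Decidable c] (a b : ℝ), (if c then a * b else 0) = a * (if c then b else 0) := by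
    intros c _ a b; split <;> simp
  simp only [Bool.false_eq_true, if_true, if_false]
  simp only [pull, ← Finset.mul_sum]
  ring

lemma pr_count {n} (p : Fin n → ℝ) (b : Bool) :
    ∀ (l : List (Fin n)), l.Nodup → ∀ c : ℕ,
      pr p (fun x => ((l.filter fun i => x i == b).length ≤ c))
        = tp c (l.map fun i => if b then p i else 1 - p i) := by
  intro l
  induction l with
  | nil =>
      intro _ c
      rw [pr_congr p (Q := fun _ => True) (by simp)]
      simp [pr_true, tp]
  | cons i l ih =>
      intro hnd c
      have hi : i ∉ l := (List.nodup_cons.mp hnd).1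
      have hl : l.Nodup := (List.nodup_cons.mp hnd).2
      have hfilt : ∀ (x : Fin n → Bool) (b' : Bool),
          (l.filter fun j => Function.update x i b' j == b) = l.filter fun j => x j == b := by
        intro x b'
        refine List.filter_congr ?_
        intro a ha
        rw [Function.update_of_ne (fun h : a = i => hi (h ▸ ha))]
      have hcons : ∀ (x : Fin n → Bool) (b' : Bool),
          (((i :: l).filter fun j => Function.update x i b' j == b).length)
            = (if b' == b then 1 else 0) + ((l.filter fun j => x j == b).length) := by
        intro x b'
        rw [List.filter_cons]
        simp only [Function.update_self]
        cases hbb : (b' == b) <;> simp [hfilt x b'] <;> omega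
      rw [pr_split p i]
      cases b with
      | true =>
          have e1 : pr p (fun x => (((i :: l).filter fun j => Function.update x i true j == true).length ≤ c))
              = pr p (fun x => (l.filter fun j => x j == true).length + 1 ≤ c) :=
            pr_congr p (fun x => by rw [hcons x true]; simp; omega)
          have e2 : pr p (fun x => (((i :: l).filter fun j => Function.update x i false j == true).length ≤ c))
              = pr p (fun x => (l.filter fun j => x j == true).length ≤ c) :=
            pr_congr p (fun x => by rw [hcons x false]; simp)
          simp only [e1, e2]
          cases c with
          | zero =>
              rw [pr_congr p (Q := fun _ => False) (by intro x; simp), pr_false,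
                ih hl 0]
              simp [tp]
          | succ c =>
              rw [pr_congr p (Q := fun x => (l.filter fun j => x j == true).length ≤ c)
                  (by intro x; omega), ih hl c, ih hl (c + 1)]
              simp [tp]
      | false =>
          have e1 : pr p (fun x => (((i :: l).filter fun j => Function.update x i true j == false).length ≤ c))
              = pr p (fun x => (l.filter fun j => x j == false).length ≤ c) :=
            pr_congr p (fun x => by rw [hcons x true]; simp)
          have e2 : pr p (fun x => (((i :: l).filter fun j => Function.update x i false j == false).length ≤ c))
              = pr p (fun x => (l.filter fun j => x j == false).length + 1 ≤ c) :=
            pr_congr p (fun x => by rw [hcons x false]; simp; omega)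
          simp only [e1, e2]
          cases c with
          | zero =>
              rw [pr_congr p (P := fun x => (l.filter fun j => x j == false).length + 1 ≤ 0)
                  (Q := fun _ => False) (by intro x; simp), pr_false, ih hl 0]
              simp [tp]
          | succ c =>
              rw [pr_congr p (P := fun x => (l.filter fun j => x j == false).length + 1 ≤ c + 1)
                  (Q := fun x => (l.filter fun j => x j == false).length ≤ c)
                  (by intro x; omega), ih hl c, ih hl (c + 1)]
              simp [tp]; ring


variable {n : ℕ}

lemma sort_get_mono (S : Finset (Fin n)) {m m' : ℕ}
    (hm : m < (Finset.sort S (· ≤ ·)).length) (hm' : m' < (Finset.sort S (· ≤ ·)).length)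
    (hmm : m ≤ m') : ((Finset.sort S (· ≤ ·))[m] : Fin n) ≤ (Finset.sort S (· ≤ ·))[m'] := by
  have := List.Pairwise.rel_get_of_le (Finset.pairwise_sort S (· ≤ ·))
    (a := ⟨m, hm⟩) (b := ⟨m', hm'⟩) hmm
  simpa using this

lemma sort_get_memS (S : Finset (Fin n)) {m : ℕ} (hm : m < (Finset.sort S (· ≤ ·)).length) :
    (Finset.sort S (· ≤ ·))[m] ∈ S := by
  rw [← Finset.mem_sort (· ≤ ·)]
  exact List.getElem_mem hm

lemma get_lt_of_card (S : Finset (Fin n)) (h j : ℕ)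
    (hj : j < (Finset.sort S (· ≤ ·)).length)
    (hc : j + 1 ≤ (S.filter fun i : Fin n => (i : ℕ) < h).card) :
    (((Finset.sort S (· ≤ ·))[j] : Fin n) : ℕ) < h := by
  set s := Finset.sort S (· ≤ ·) with hs
  by_contra hcon
  push_neg at hcon
  have hsub : (S.filter fun i : Fin n => (i : ℕ) < h) ⊆ (s.take j).toFinset := by
    intro x hx
    rw [Finset.mem_filter] at hx
    obtain ⟨hxS, hxh⟩ := hx
    rw [← Finset.mem_sort (· ≤ ·), ← hs, List.mem_iff_getElem] at hxS
    obtain ⟨m, hm, hmx⟩ := hxS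
    rcases Nat.lt_or_ge m j with hmj | hmj
    · rw [List.mem_toFinset, List.mem_iff_getElem]
      exact ⟨m, by simp [List.length_take]; omega, by rw [List.getElem_take]; exact hmx⟩
    · exfalso
      have := sort_get_mono S hj hm hmj
      rw [hmx] at this
      have : h ≤ (x : ℕ) := le_trans hcon this
      omega
  have h1 := Finset.card_le_card hsub
  have h2 := List.toFinset_card_le (s.take j)
  have h3 : (s.take j).length ≤ j := by simp [List.length_take]
  omega

lemma card_of_get_lt (S : Finset (Fin n)) (h j : ℕ)
    (hj : j < (Finset.sort S (· ≤ ·)).length)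
    (he : (((Finset.sort S (· ≤ ·))[j] : Fin n) : ℕ) < h) :
    j + 1 ≤ (S.filter fun i : Fin n => (i : ℕ) < h).card := by
  set s := Finset.sort S (· ≤ ·) with hs
  have hnd : (s.take (j + 1)).Nodup := (List.take_sublist _ _).nodup (Finset.sort_nodup _ _)
  have hsub : (s.take (j + 1)).toFinset ⊆ S.filter fun i : Fin n => (i : ℕ) < h := by
    intro x hx
    rw [List.mem_toFinset, List.mem_iff_getElem] at hx
    obtain ⟨m, hm, hmx⟩ := hx
    have hmlen : m < s.length := lt_of_lt_of_le hm (by rw [List.length_take]; omega)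
    rw [List.getElem_take] at hmx
    have hmj : m ≤ j := by simp [List.length_take] at hm; omega
    have hle := sort_get_mono S hmlen hj hmj
    rw [hmx] at hle
    rw [Finset.mem_filter]
    refine ⟨hmx ▸ sort_get_memS S hmlen, lt_of_le_of_lt ?_ he⟩
    exact hle
  have h1 := Finset.card_le_card hsub
  have h2 : (s.take (j + 1)).toFinset.card = j + 1 := by
    rw [List.toFinset_card_of_nodup hnd]
    simp [List.length_take]; omega
  omega

lemma get_ge_of_card (S : Finset (Fin n)) (a j : ℕ)
    (hj : j < (Finset.sort S (· ≤ ·)).length)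
    (hc : (Finset.sort S (· ≤ ·)).length - j ≤ (S.filter fun i : Fin n => a ≤ (i : ℕ)).card) :
    a ≤ (((Finset.sort S (· ≤ ·))[j] : Fin n) : ℕ) := by
  set s := Finset.sort S (· ≤ ·) with hs
  by_contra hcon
  push_neg at hcon
  have hsub : (S.filter fun i : Fin n => a ≤ (i : ℕ)) ⊆ (s.drop (j + 1)).toFinset := by
    intro x hx
    rw [Finset.mem_filter] at hx
    obtain ⟨hxS, hxh⟩ := hx
    rw [← Finset.mem_sort (· ≤ ·), ← hs, List.mem_iff_getElem] at hxS
    obtain ⟨m, hm, hmx⟩ := hxS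
    rcases Nat.lt_or_ge j m with hmj | hmj
    · rw [List.mem_toFinset, List.mem_iff_getElem]
      refine ⟨m - (j + 1), by simp [List.length_drop]; omega, ?_⟩
      have hidx : j + 1 + (m - (j + 1)) = m := by omega
      have := List.getElem_drop' (xs := s) (i := j + 1) (j := m - (j + 1)) (by omega)
      rw [← this]
      simp only [hidx]
      exact hmx
    · exfalso
      have := sort_get_mono S hm hj hmj
      rw [hmx] at this
      have : (x : ℕ) ≤ ((s[j] : Fin n) : ℕ) := this
      omega
  have h1 := Finset.card_le_card hsub
  have h2 := List.toFinset_card_le (s.drop (j + 1))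
  have h3 : (s.drop (j + 1)).length = s.length - (j + 1) := by simp [List.length_drop]
  omega

lemma card_of_get_ge (S : Finset (Fin n)) (a j : ℕ)
    (hj : j < (Finset.sort S (· ≤ ·)).length)
    (ha : a ≤ (((Finset.sort S (· ≤ ·))[j] : Fin n) : ℕ)) :
    (Finset.sort S (· ≤ ·)).length - j ≤ (S.filter fun i : Fin n => a ≤ (i : ℕ)).card := by
  set s := Finset.sort S (· ≤ ·) with hs
  have hnd : (s.drop j).Nodup := (List.drop_sublist _ _).nodup (Finset.sort_nodup _ _)
  have hsub : (s.drop j).toFinset ⊆ S.filter fun i : Fin n => a ≤ (i : ℕ) := by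
    intro x hx
    rw [List.mem_toFinset, List.mem_iff_getElem] at hx
    obtain ⟨m, hm, hmx⟩ := hx
    have hmlen : j + m < s.length := by simp [List.length_drop] at hm; omega
    rw [List.getElem_drop] at hmx
    have hle := sort_get_mono S hj hmlen (Nat.le_add_right _ _)
    rw [hmx] at hle
    rw [Finset.mem_filter]
    exact ⟨hmx ▸ sort_get_memS S hmlen, le_trans ha hle⟩
  have h1 := Finset.card_le_card hsub
  have h2 : (s.drop j).toFinset.card = s.length - j := by
    rw [List.toFinset_card_of_nodup hnd]; simp [List.length_drop]
  omega



lemma length_filter_bool {n : ℕ} (x : Fin n → Bool) (l : List (Fin n)) :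
    (l.filter fun i => x i == true).length + (l.filter fun i => x i == false).length
      = l.length := by
  induction l with
  | nil => simp
  | cons a t ih =>
      simp only [List.filter_cons]
      cases h : x a <;> simp_all <;> omega

lemma cost_gt_iff {n k : ℕ} (hk1 : 1 ≤ k) (hkn : k ≤ n) (π : List (Fin n))
    (x : Fin n → Bool) (ℓ : ℕ) (hℓL : ℓ ≤ π.length) (hℓn : ℓ ≤ n) :
    ℓ < cost n k π x ↔ ¬ Stops n k π x ℓ := by
  constructor
  · intro hlt hs
    have hle : cost n k π x ≤ ℓ := by
      rw [cost, if_pos ⟨ℓ, hℓL, hs⟩]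
      exact Nat.sInf_le hs
    omega
  · intro hns
    have hmono : ∀ m, m ≤ ℓ → Stops n k π x m → False := by
      intro m hmℓ hm
      apply hns
      have h1 : (π.take ℓ).take m = π.take m := by
        rw [List.take_take]; congr 1; omega
      have hsub : List.Sublist (π.take m) (π.take ℓ) := h1 ▸ List.take_sublist m (π.take ℓ)
      rcases hm with h1 | h1
      · exact Or.inl (le_trans h1 ((hsub.filter _).length_le))
      · exact Or.inr (le_trans h1 ((hsub.filter _).length_le))
    rw [cost]
    split_ifs with hex
    · rcases Nat.lt_or_ge ℓ (sInf {m | Stops n k π x m}) with h | h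
      · exact h
      · obtain ⟨m0, _, hm0⟩ := hex
        have hne : {m | Stops n k π x m}.Nonempty := ⟨m0, hm0⟩
        exact absurd (Nat.sInf_mem hne) (fun hc => hmono _ h hc)
    · rcases Nat.lt_or_ge ℓ n with h | h
      · exact h
      · exfalso
        apply hns
        have hlen : (π.take ℓ).length = ℓ := by rw [List.length_take]; omega
        have hsum := length_filter_bool x (π.take ℓ)
        rw [hlen] at hsum
        have hf1 : ((π.take ℓ).filter fun i => x i) = (π.take ℓ).filter fun i => x i == true := by
          simp
        have hf2 : ((π.take ℓ).filter fun i => !x i) = (π.take ℓ).filter fun i => x i == false := by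
          apply List.filter_congr
          intro a _
          cases x a <;> rfl
        rw [Stops, hf1, hf2]
        omega


end Stmt9

open Stmt9 in
/-- Let `π` and `π'` be partial non-adaptive policies (injective sequences of
indices) and suppose that for some `ℓ ∈ [n]`, `ℓ ≤ length π`, and `ℓ' ∈ [n]`,
`ℓ' ≤ length π'`, the set `{π'(1),…,π'(ℓ')}` dominates the set `{π(1),…,π(ℓ)}`. Then
`Pr[cost(π') > ℓ'] ≤ Pr[cost(π) > ℓ]`. -/
theorem stmt_9 (n k : ℕ) (hk1 : 1 ≤ k) (hkn : k ≤ n)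
    (p : Fin n → ℝ) (hp : ∀ i, 0 < p i ∧ p i < 1)
    (hmono : ∀ i j : Fin n, i ≤ j → p i ≤ p j)
    (π π' : List (Fin n)) (hπ : π.Nodup) (hπ' : π'.Nodup)
    (ℓ ℓ' : ℕ)
    (hℓ1 : 1 ≤ ℓ) (hℓn : ℓ ≤ n) (hℓL : ℓ ≤ π.length)
    (hℓ'1 : 1 ≤ ℓ') (hℓ'n : ℓ' ≤ n) (hℓ'L : ℓ' ≤ π'.length)
    (hcard : (π.take ℓ).toFinset.card ≤ (π'.take ℓ').toFinset.card)
    (hdom : ∀ h ∈ Finset.Icc 1 n,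
      ((π.take ℓ).toFinset.filter fun i : Fin n => (i : ℕ) < h).card ≤
        ((π'.take ℓ').toFinset.filter fun i : Fin n => (i : ℕ) < h).card ∧
      ((π.take ℓ).toFinset.filter fun i : Fin n => n - h ≤ (i : ℕ)).card ≤
        ((π'.take ℓ').toFinset.filter fun i : Fin n => n - h ≤ (i : ℕ)).card) :
    pr p (fun x => ℓ' < cost n k π' x) ≤ pr p (fun x => ℓ < cost n k π x) := by
  classical
  set l := π.take ℓ with hl
  set l' := π'.take ℓ' with hl'
  have hlnd : l.Nodup := (List.take_sublist _ _).nodup hπ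
  have hlnd' : l'.Nodup := (List.take_sublist _ _).nodup hπ'
  have hlen : l.length = ℓ := by rw [hl, List.length_take]; omega
  have hlen' : l'.length = ℓ' := by rw [hl', List.length_take]; omega
  set S := l.toFinset with hS
  set S' := l'.toFinset with hS'
  have hcardS : S.card = ℓ := by rw [hS, List.toFinset_card_of_nodup hlnd, hlen]
  have hcardS' : S'.card = ℓ' := by rw [hS', List.toFinset_card_of_nodup hlnd', hlen']
  have hll' : ℓ ≤ ℓ' := by rw [← hcardS, ← hcardS']; exact hcard
  set s := Finset.sort S (· ≤ ·) with hs
  set t := Finset.sort S' (· ≤ ·) with ht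
  have hslen : s.length = ℓ := by rw [hs, Finset.length_sort, hcardS]
  have htlen : t.length = ℓ' := by rw [ht, Finset.length_sort, hcardS']
  have hperm : l.Perm s :=
    List.perm_of_nodup_nodup_toFinset_eq hlnd (Finset.sort_nodup _ _)
      (by rw [hs, Finset.sort_toFinset])
  have hperm' : l'.Perm t :=
    List.perm_of_nodup_nodup_toFinset_eq hlnd' (Finset.sort_nodup _ _)
      (by rw [ht, Finset.sort_toFinset])
  set d := ℓ' - ℓ with hd
  -- pointwise domination, left and right
  have hleft : ∀ (j : ℕ) (hjs : j < s.length) (hjt : j < t.length),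
      ((t[j] : Fin n) : ℕ) ≤ ((s[j] : Fin n) : ℕ) := by
    intro j hjs hjt
    have hsj : ((s[j] : Fin n) : ℕ) < n := (s[j]).isLt
    have h1 := card_of_get_lt S (((s[j] : Fin n) : ℕ) + 1) j hjs (Nat.lt_succ_self _)
    have h2 := (hdom (((s[j] : Fin n) : ℕ) + 1)
      (Finset.mem_Icc.mpr ⟨by omega, by omega⟩)).1
    have h3 : ((t[j] : Fin n) : ℕ) < ((s[j] : Fin n) : ℕ) + 1 :=
      get_lt_of_card S' (((s[j] : Fin n) : ℕ) + 1) j hjt (le_trans h1 h2)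
    omega
  have hright : ∀ (j : ℕ) (hjs : j < s.length) (hjt : d + j < t.length),
      ((s[j] : Fin n) : ℕ) ≤ ((t[d + j] : Fin n) : ℕ) := by
    intro j hjs hjt
    have hsj : ((s[j] : Fin n) : ℕ) < n := (s[j]).isLt
    have h1 : s.length - j ≤ (S.filter fun i : Fin n => ((s[j] : Fin n) : ℕ) ≤ (i : ℕ)).card :=
      card_of_get_ge S ((s[j] : Fin n) : ℕ) j hjs le_rfl
    have h2 := (hdom (n - ((s[j] : Fin n) : ℕ))
      (Finset.mem_Icc.mpr ⟨by omega, by omega⟩)).2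
    have hna : n - (n - ((s[j] : Fin n) : ℕ)) = ((s[j] : Fin n) : ℕ) := by omega
    simp only [hna] at h2
    have hc : t.length - (d + j) ≤ (S'.filter fun i : Fin n => ((s[j] : Fin n) : ℕ) ≤ (i : ℕ)).card := by
      rw [hslen] at h1; rw [htlen]; omega
    exact get_ge_of_card S' ((s[j] : Fin n) : ℕ) (d + j) hjt hc
  -- event reduction
  have hevent : ∀ (σ : List (Fin n)) (m : ℕ), m ≤ σ.length → m ≤ n → ∀ x : Fin n → Bool,
      (m < cost n k σ x ↔
        (((σ.take m).filter fun i => x i == true).length ≤ k - 1 ∧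
          ((σ.take m).filter fun i => x i == false).length ≤ n - k)) := by
    intro σ m hmL hmn x
    rw [cost_gt_iff hk1 hkn σ x m hmL hmn]
    have hf1 : ((σ.take m).filter fun i => x i) = (σ.take m).filter fun i => x i == true := by
      simp
    have hf2 : ((σ.take m).filter fun i => !x i) = (σ.take m).filter fun i => x i == false :=
      List.filter_congr (fun a _ => by cases x a <;> rfl)
    rw [Stops, hf1, hf2]
    omega
  have e1 : pr p (fun x => ℓ < cost n k π x)
      = pr p (fun x => ((s.filter fun i => x i == true).length ≤ k - 1 ∧
          (s.filter fun i => x i == false).length ≤ n - k)) := by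
    refine pr_congr p (fun x => ?_)
    rw [hevent π ℓ hℓL hℓn x, ← hl,
      (hperm.filter (fun i => x i == true)).length_eq,
      (hperm.filter (fun i => x i == false)).length_eq]
  have e1' : pr p (fun x => ℓ' < cost n k π' x)
      = pr p (fun x => ((t.filter fun i => x i == true).length ≤ k - 1 ∧
          (t.filter fun i => x i == false).length ≤ n - k)) := by
    refine pr_congr p (fun x => ?_)
    rw [hevent π' ℓ' hℓ'L hℓ'n x, ← hl',
      (hperm'.filter (fun i => x i == true)).length_eq,
      (hperm'.filter (fun i => x i == false)).length_eq]
  -- inclusion-exclusion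
  have hABs : ∀ x : Fin n → Bool, ((s.filter fun i => x i == true).length ≤ k - 1) ∨
      ((s.filter fun i => x i == false).length ≤ n - k) := by
    intro x
    have := length_filter_bool x s
    rw [hslen] at this
    omega
  have hABt : ∀ x : Fin n → Bool, ((t.filter fun i => x i == true).length ≤ k - 1) ∨
      ((t.filter fun i => x i == false).length ≤ n - k) := by
    intro x
    have := length_filter_bool x t
    rw [htlen] at this
    omega
  have e2 := pr_and p hABs
  have e2' := pr_and p hABt
  -- counts to tp
  have hmapT : ∀ L : List (Fin n),
      (L.map fun i => if (true : Bool) then p i else 1 - p i) = L.map p := by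
    intro L; simp
  have hmapF : ∀ L : List (Fin n),
      (L.map fun i => if (false : Bool) then p i else 1 - p i) = L.map fun i => 1 - p i := by
    intro L; simp
  have hA : pr p (fun x => (s.filter fun i => x i == true).length ≤ k - 1)
      = tp (k - 1) (s.map p) := by
    rw [pr_count p true s (Finset.sort_nodup _ _) (k - 1), hmapT]
  have hB : pr p (fun x => (s.filter fun i => x i == false).length ≤ n - k)
      = tp (n - k) (s.map fun i => 1 - p i) := by
    rw [pr_count p false s (Finset.sort_nodup _ _) (n - k), hmapF]
  have hA' : pr p (fun x => (t.filter fun i => x i == true).length ≤ k - 1)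
      = tp (k - 1) (t.map p) := by
    rw [pr_count p true t (Finset.sort_nodup _ _) (k - 1), hmapT]
  have hB' : pr p (fun x => (t.filter fun i => x i == false).length ≤ n - k)
      = tp (n - k) (t.map fun i => 1 - p i) := by
    rw [pr_count p false t (Finset.sort_nodup _ _) (n - k), hmapF]
  -- Ok facts
  have hok1 : ∀ L : List (Fin n), Ok (L.map p) := by
    intro L q hq
    obtain ⟨i, _, rfl⟩ := List.mem_map.mp hq
    exact ⟨(hp i).1.le, (hp i).2.le⟩
  have hok2 : ∀ L : List (Fin n), Ok (L.map fun i => 1 - p i) := by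
    intro L q hq
    obtain ⟨i, _, rfl⟩ := List.mem_map.mp hq
    constructor
    · have := (hp i).2; linarith
    · have := (hp i).1; linarith
  -- inequality for ones
  have hF2A : List.Forall₂ (· ≤ ·) (s.map p) ((t.drop d).map p) := by
    rw [List.forall₂_iff_get]
    constructor
    · rw [List.length_map, List.length_map, List.length_drop, hslen, htlen]; omega
    · intro i h1 h2
      rw [List.length_map, hslen] at h1
      rw [List.length_map, List.length_drop, htlen] at h2
      simp only [List.get_eq_getElem, List.getElem_map, List.getElem_drop]
      apply hmono
      rw [Fin.le_def]
      exact hright i (by omega) (by omega)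
  have hineqA : tp (k - 1) (t.map p) ≤ tp (k - 1) (s.map p) := by
    have hsplit : (t.take d).map p ++ (t.drop d).map p = t.map p := by
      rw [← List.map_append, List.take_append_drop]
    calc tp (k - 1) (t.map p) = tp (k - 1) ((t.take d).map p ++ (t.drop d).map p) := by
          rw [hsplit]
      _ ≤ tp (k - 1) ((t.drop d).map p) := tp_suffix _ _ _ (by rw [hsplit]; exact hok1 t)
      _ ≤ tp (k - 1) (s.map p) := tp_forall₂ _ hF2A (hok1 s) (hok1 _)
  -- inequality for zeros
  have hF2B : List.Forall₂ (· ≤ ·) (s.map fun i => 1 - p i) ((t.take ℓ).map fun i => 1 - p i) := by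
    rw [List.forall₂_iff_get]
    constructor
    · rw [List.length_map, List.length_map, List.length_take, hslen, htlen]; omega
    · intro i h1 h2
      rw [List.length_map, hslen] at h1
      rw [List.length_map, List.length_take, htlen] at h2
      simp only [List.get_eq_getElem, List.getElem_map, List.getElem_take]
      have hle : ((t[i] : Fin n) : ℕ) ≤ ((s[i] : Fin n) : ℕ) :=
        hleft i (by omega) (by omega)
      have := hmono _ _ (Fin.le_def.mpr hle)
      linarith
  have hineqB : tp (n - k) (t.map fun i => 1 - p i) ≤ tp (n - k) (s.map fun i => 1 - p i) := by
    have hsplit : ((t.take ℓ).map fun i => 1 - p i) ++ ((t.drop ℓ).map fun i => 1 - p i)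
        = t.map fun i => 1 - p i := by
      rw [← List.map_append, List.take_append_drop]
    calc tp (n - k) (t.map fun i => 1 - p i)
        = tp (n - k) (((t.take ℓ).map fun i => 1 - p i) ++ ((t.drop ℓ).map fun i => 1 - p i)) := by
          rw [hsplit]
      _ ≤ tp (n - k) ((t.take ℓ).map fun i => 1 - p i) :=
          tp_prefix _ _ _ (by rw [hsplit]; exact hok2 t)
      _ ≤ tp (n - k) (s.map fun i => 1 - p i) := tp_forall₂ _ hF2B (hok2 s) (hok2 _)
  rw [e1, e1', e2, e2', hA, hB, hA', hB']
  linarith
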